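/- Let τ ∈ ℝ, δ > 0 and let φ̂ be holomorphic on a star-shaped (w.r.t. 0) domain S ⊆ ℂ with |φ̂(ζ)| ≤ C e^{τ|ζ|} on S. Suppose |φ̂₀(ζ)| ≤ A e^{τ₊|ζ|} on S for another holomorphic φ̂₀. Then for every k ≥ 0, the function ((−ζ)^k/k!)·φ̂ convolved with the k-fold convolution power φ̂₀^{*k} satisfies |(((−ζ)^k/k!) φ̂) * φ̂₀^{*k}(ζ)| ≤ C A^k (|ζ|^{2k}/(2k)!) e^{max(τ,τ₊)|ζ|} on S, and hence Σ_{k≥0} |(((−ζ)^k/k!) φ̂) * φ̂₀^{*k}(ζ)| ≤ C e^{(√A + max(τ,τ₊))|ζ|}. -/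

import Mathlib

open MeasureTheory intervalIntegral

/-- Convolution of two functions along the segment `[0, ζ]`. -/
noncomputable def segConv (f g : ℂ → ℂ) : ℂ → ℂ :=
  fun ζ => ζ * ∫ t in (0:ℝ)..1, f ((t : ℂ) * ζ) * g (ζ - (t : ℂ) * ζ)

/-- `convIter f φ₀ k = f * φ₀^{*k}`, the convolution of `f` with the `k`-fold
convolution power of `φ₀` (with `φ₀^{*0}` the convolution unit). -/
noncomputable def convIter (f φ₀ : ℂ → ℂ) : ℕ → ℂ → ℂ
  | 0 => f
  | k + 1 => segConv (convIter f φ₀ k) φ₀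

/-- One convolution step degrades the bound by one factorial degree. -/
lemma segConv_step (S : Set ℂ)
    (hstar : ∀ ζ ∈ S, ∀ t : ℝ, t ∈ Set.Icc (0:ℝ) 1 → (t : ℂ) * ζ ∈ S)
    (τplus σ A : ℝ) (hσ : τplus ≤ σ) (hA : 0 ≤ A) (φ₀ : ℂ → ℂ)
    (hφ₀ : ∀ ζ ∈ S, ‖φ₀ ζ‖ ≤ A * Real.exp (τplus * ‖ζ‖))
    (f : ℂ → ℂ) (M : ℝ) (hM : 0 ≤ M) (n : ℕ)
    (hf : ∀ ζ ∈ S, ‖f ζ‖ ≤ M * (‖ζ‖ ^ n / n.factorial) * Real.exp (σ * ‖ζ‖)) :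
    ∀ ζ ∈ S, ‖segConv f φ₀ ζ‖ ≤
      M * A * (‖ζ‖ ^ (n + 1) / (n + 1).factorial) * Real.exp (σ * ‖ζ‖) := by
  intro ζ hζ
  set K : ℝ := M * A * (‖ζ‖ ^ n / n.factorial) * Real.exp (σ * ‖ζ‖) with hK
  have hKnonneg : 0 ≤ K := by positivity
  have hbound : ∀ t ∈ Set.uIoc (0:ℝ) 1,
      ‖f ((t : ℂ) * ζ) * φ₀ (ζ - (t : ℂ) * ζ)‖ ≤ K * t ^ n := by
    intro t ht
    rw [Set.uIoc_of_le (by norm_num : (0:ℝ) ≤ 1)] at ht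
    obtain ⟨ht0, ht1⟩ := ht
    have ht0' : (0:ℝ) ≤ t := le_of_lt ht0
    have h1t : (0:ℝ) ≤ 1 - t := by linarith
    have hmem1 : (t : ℂ) * ζ ∈ S := hstar ζ hζ t ⟨ht0', ht1⟩
    have hrw : ζ - (t : ℂ) * ζ = ((1 - t : ℝ) : ℂ) * ζ := by push_cast; ring
    have hmem2 : ζ - (t : ℂ) * ζ ∈ S := by
      rw [hrw]; exact hstar ζ hζ (1 - t) ⟨h1t, by linarith⟩
    have hn1 : ‖(t : ℂ) * ζ‖ = t * ‖ζ‖ := by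
      rw [norm_mul, Complex.norm_real, Real.norm_eq_abs, abs_of_nonneg ht0']
    have hn2 : ‖ζ - (t : ℂ) * ζ‖ = (1 - t) * ‖ζ‖ := by
      rw [hrw, norm_mul, Complex.norm_real, Real.norm_eq_abs, abs_of_nonneg h1t]
    have h1 : ‖f ((t : ℂ) * ζ)‖ ≤
        M * ((t * ‖ζ‖) ^ n / n.factorial) * Real.exp (σ * (t * ‖ζ‖)) := by
      have := hf _ hmem1; rwa [hn1] at this
    have h2 : ‖φ₀ (ζ - (t : ℂ) * ζ)‖ ≤ A * Real.exp (σ * ((1 - t) * ‖ζ‖)) := by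
      have := hφ₀ _ hmem2
      rw [hn2] at this
      refine this.trans ?_
      have : τplus * ((1 - t) * ‖ζ‖) ≤ σ * ((1 - t) * ‖ζ‖) := by
        apply mul_le_mul_of_nonneg_right hσ; positivity
      exact mul_le_mul_of_nonneg_left (Real.exp_le_exp.2 this) hA
    rw [norm_mul]
    calc ‖f ((t : ℂ) * ζ)‖ * ‖φ₀ (ζ - (t : ℂ) * ζ)‖
        ≤ (M * ((t * ‖ζ‖) ^ n / n.factorial) * Real.exp (σ * (t * ‖ζ‖))) *
            (A * Real.exp (σ * ((1 - t) * ‖ζ‖))) := by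
          apply mul_le_mul h1 h2 (norm_nonneg _); positivity
      _ = K * t ^ n := by
          have hexp : Real.exp (σ * (t * ‖ζ‖)) * Real.exp (σ * ((1 - t) * ‖ζ‖)) =
              Real.exp (σ * ‖ζ‖) := by rw [← Real.exp_add]; ring_nf
          rw [hK, ← hexp, mul_pow]; ring
  have hintegrable : IntervalIntegrable (fun t => K * t ^ n) volume 0 1 :=
    (continuous_const.mul (continuous_pow n)).intervalIntegrable 0 1
  have hint : ‖∫ t in (0:ℝ)..1, f ((t : ℂ) * ζ) * φ₀ (ζ - (t : ℂ) * ζ)‖ ≤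
      |∫ t in (0:ℝ)..1, K * t ^ n| :=
    intervalIntegral.norm_integral_le_abs_of_norm_le
      ((ae_restrict_iff' measurableSet_uIoc).2 (Filter.Eventually.of_forall hbound))
      hintegrable
  have hval : (∫ t in (0:ℝ)..1, K * t ^ n) = K / (n + 1) := by
    rw [intervalIntegral.integral_const_mul, integral_pow]
    norm_num [div_eq_mul_inv]
  rw [hval, abs_of_nonneg (by positivity)] at hint
  have : ‖segConv f φ₀ ζ‖ ≤ ‖ζ‖ * (K / (n + 1)) := by
    rw [segConv, norm_mul]
    exact mul_le_mul_of_nonneg_left hint (norm_nonneg _)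
  refine this.trans (le_of_eq ?_)
  rw [hK, Nat.factorial_succ]
  have hnf : (n.factorial : ℝ) ≠ 0 := Nat.cast_ne_zero.2 n.factorial_ne_zero
  field_simp
  push_cast
  ring

/-- If `|φ̂(ζ)| ≤ C e^{τ|ζ|}` and `|φ̂₀(ζ)| ≤ A e^{τ₊|ζ|}` on a star-shaped
domain `S`, then `|(((−ζ)^k/k!) φ̂) * φ̂₀^{*k}(ζ)| ≤ C A^k (|ζ|^{2k}/(2k)!)
e^{max(τ,τ₊)|ζ|}` on `S`, and summing over `k`,
`Σ_k |⋯| ≤ C e^{(√A + max(τ,τ₊))|ζ|}`. -/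
theorem conv_powers_exponential_bound (S : Set ℂ) (hS : IsOpen S)
    (hstar : ∀ ζ ∈ S, ∀ t : ℝ, t ∈ Set.Icc (0:ℝ) 1 → (t : ℂ) * ζ ∈ S)
    (τ τplus C A : ℝ) (hC : 0 ≤ C) (hA : 0 ≤ A)
    (φ φ₀ : ℂ → ℂ) (hφd : DifferentiableOn ℂ φ S) (hφ₀d : DifferentiableOn ℂ φ₀ S)
    (hφ : ∀ ζ ∈ S, ‖φ ζ‖ ≤ C * Real.exp (τ * ‖ζ‖))
    (hφ₀ : ∀ ζ ∈ S, ‖φ₀ ζ‖ ≤ A * Real.exp (τplus * ‖ζ‖)) :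
    ∀ ζ ∈ S,
      (∀ k : ℕ,
        ‖convIter (fun ξ => (-ξ) ^ k / k.factorial * φ ξ) φ₀ k ζ‖ ≤
          C * A ^ k * (‖ζ‖ ^ (2 * k) / (2 * k).factorial) *
            Real.exp (max τ τplus * ‖ζ‖)) ∧
      ∑' k : ℕ, ‖convIter (fun ξ => (-ξ) ^ k / k.factorial * φ ξ) φ₀ k ζ‖ ≤
        C * Real.exp ((Real.sqrt A + max τ τplus) * ‖ζ‖) := by
  set σ : ℝ := max τ τplus with hσdef
  have hτσ : τ ≤ σ := le_max_left _ _
  have hτpσ : τplus ≤ σ := le_max_right _ _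
  -- the main inductive bound
  have key : ∀ k j : ℕ, ∀ ζ ∈ S,
      ‖convIter (fun ξ => (-ξ) ^ k / k.factorial * φ ξ) φ₀ j ζ‖ ≤
        (C * A ^ j) * (‖ζ‖ ^ (k + j) / (k + j).factorial) * Real.exp (σ * ‖ζ‖) := by
    intro k j
    induction j with
    | zero =>
      intro ζ hζ
      simp only [convIter, pow_zero, mul_one, Nat.add_zero]
      have h0 : ‖(-ζ) ^ k / (k.factorial : ℂ) * φ ζ‖ =
          ‖ζ‖ ^ k / k.factorial * ‖φ ζ‖ := by
        rw [norm_mul, norm_div, norm_pow, norm_neg, Complex.norm_natCast]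
      rw [h0]
      have hφb : ‖φ ζ‖ ≤ C * Real.exp (σ * ‖ζ‖) := by
        refine (hφ ζ hζ).trans ?_
        exact mul_le_mul_of_nonneg_left
          (Real.exp_le_exp.2 (mul_le_mul_of_nonneg_right hτσ (norm_nonneg _))) hC
      calc ‖ζ‖ ^ k / k.factorial * ‖φ ζ‖
          ≤ ‖ζ‖ ^ k / k.factorial * (C * Real.exp (σ * ‖ζ‖)) := by
            apply mul_le_mul_of_nonneg_left hφb; positivity
        _ = C * (‖ζ‖ ^ (k + 0) / (k + 0).factorial) * Real.exp (σ * ‖ζ‖) := by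
            rw [Nat.add_zero]; ring
    | succ j ih =>
      have := segConv_step S hstar τplus σ A hτpσ hA φ₀ hφ₀
        (convIter (fun ξ => (-ξ) ^ k / k.factorial * φ ξ) φ₀ j)
        (C * A ^ j) (by positivity) (k + j) ih
      intro ζ hζ
      have h2 := this ζ hζ
      show ‖segConv (convIter (fun ξ => (-ξ) ^ k / k.factorial * φ ξ) φ₀ j) φ₀ ζ‖ ≤ _
      refine h2.trans (le_of_eq ?_)
      rw [pow_succ, ← Nat.add_assoc]
      ring
  intro ζ hζ
  have hmain : ∀ k : ℕ,
      ‖convIter (fun ξ => (-ξ) ^ k / k.factorial * φ ξ) φ₀ k ζ‖ ≤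
        C * A ^ k * (‖ζ‖ ^ (2 * k) / (2 * k).factorial) * Real.exp (σ * ‖ζ‖) := by
    intro k
    have := key k k ζ hζ
    rwa [show k + k = 2 * k by ring] at this
  refine ⟨hmain, ?_⟩
  -- the summation part
  set x : ℝ := Real.sqrt A * ‖ζ‖ with hxdef
  have hx0 : 0 ≤ x := by positivity
  have hAx : ∀ k : ℕ, A ^ k * ‖ζ‖ ^ (2 * k) = x ^ (2 * k) := by
    intro k
    have h2 : Real.sqrt A ^ (2 * k) = A ^ k := by
      rw [pow_mul, Real.sq_sqrt hA]
    rw [hxdef, mul_pow, h2]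
  have hgsumm : Summable (fun k : ℕ => x ^ (2 * k) / (2 * k).factorial) :=
    (Real.summable_pow_div_factorial x).comp_injective
      (fun a b h => Nat.eq_of_mul_eq_mul_left two_pos h)
  have hGsumm : Summable (fun k : ℕ =>
      C * Real.exp (σ * ‖ζ‖) * (x ^ (2 * k) / (2 * k).factorial)) :=
    hgsumm.mul_left _
  have hterm : ∀ k : ℕ,
      ‖convIter (fun ξ => (-ξ) ^ k / k.factorial * φ ξ) φ₀ k ζ‖ ≤
        C * Real.exp (σ * ‖ζ‖) * (x ^ (2 * k) / (2 * k).factorial) := by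
    intro k
    refine (hmain k).trans (le_of_eq ?_)
    rw [show C * A ^ k * (‖ζ‖ ^ (2 * k) / (2 * k).factorial) * Real.exp (σ * ‖ζ‖)
        = C * Real.exp (σ * ‖ζ‖) * ((A ^ k * ‖ζ‖ ^ (2 * k)) / (2 * k).factorial) by ring,
      hAx k]
  have hsumm : Summable (fun k : ℕ =>
      ‖convIter (fun ξ => (-ξ) ^ k / k.factorial * φ ξ) φ₀ k ζ‖) :=
    Summable.of_nonneg_of_le (fun k => norm_nonneg _) hterm hGsumm
  calc ∑' k : ℕ, ‖convIter (fun ξ => (-ξ) ^ k / k.factorial * φ ξ) φ₀ k ζ‖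
      ≤ ∑' k : ℕ, C * Real.exp (σ * ‖ζ‖) * (x ^ (2 * k) / (2 * k).factorial) :=
        hsumm.tsum_le_tsum hterm hGsumm
    _ = C * Real.exp (σ * ‖ζ‖) * ∑' k : ℕ, x ^ (2 * k) / (2 * k).factorial :=
        tsum_mul_left
    _ ≤ C * Real.exp (σ * ‖ζ‖) * Real.exp x := by
        apply mul_le_mul_of_nonneg_left _ (by positivity)
        have hle : ∑' k : ℕ, x ^ (2 * k) / (2 * k).factorial ≤
            ∑' n : ℕ, x ^ n / n.factorial :=
          hgsumm.tsum_le_tsum_of_inj (fun k : ℕ => 2 * k)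
            (fun a b h => Nat.eq_of_mul_eq_mul_left two_pos h)
            (fun c _ => by positivity)
            (fun k => le_rfl) (Real.summable_pow_div_factorial x)
        refine hle.trans (le_of_eq ?_)
        rw [Real.exp_eq_exp_ℝ, NormedSpace.exp_eq_tsum_div]
    _ = C * Real.exp ((Real.sqrt A + σ) * ‖ζ‖) := by
        rw [mul_assoc, ← Real.exp_add, hxdef]
        ring_nf
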